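/- Let D be a finite domain, Γ a valued constraint language over D, and consider instances I over variables V with objective φ_I : D^V → ℚ≥0 given as a weighted sum of constraints of arity at most a_max. If s is an assignment with φ_I(s) ≥ r·opt_I (0 < ε ≤ r ≤ 1) and |V| ≥ r·|D|·a_max/ε, then reassigning the |D| variables with smallest contribution (contribution of x = the weighted sum of values of constraints whose scope contains x) bijectively to the labels of D yields a surjective assignment s' with φ_I(s') ≥ (r−ε)·sopt_I, where sopt_I is the maximum value over surjective assignments. -/

import Mathlib

/-- Given a Max-VCSP instance with objective `φ(s) = Σᵢ wᵢ·cᵢ(s)`, where each constraint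
`cᵢ` depends only on its scope `Sc i` of size at most `a_max`, `opt` is the maximum value
over all assignments and `sopt` the maximum over surjective assignments: if `s` is an
`r`-approximate solution (`φ(s) ≥ r·opt`), `0 < ε ≤ r ≤ 1`, and
`|V| ≥ r·|D|·a_max/ε`, then for any set `U` of `|D|` variables of smallest contribution,
reassigning the variables of `U` bijectively onto `D` (keeping the rest as in `s`) yields
a surjective assignment `s'` with `φ(s') ≥ (r−ε)·sopt`. -/
theorem stmt16 {V D : Type*} [Fintype V] [DecidableEq V] [Fintype D] [DecidableEq D]
    (q : ℕ) (w : Fin q → NNRat) (c : Fin q → (V → D) → NNRat)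
    (Sc : Fin q → Finset V) (amax : ℕ)
    (har : ∀ i, (Sc i).card ≤ amax)
    (hdep : ∀ i, ∀ s t : V → D, (∀ x ∈ Sc i, s x = t x) → c i s = c i t)
    (φ : (V → D) → NNRat) (hφ : ∀ s, φ s = ∑ i, w i * c i s)
    (opt sopt : NNRat)
    (hoptub : ∀ t : V → D, φ t ≤ opt)
    (hoptatt : ∃ t : V → D, φ t = opt)
    (hsoptub : ∀ t : V → D, Function.Surjective t → φ t ≤ sopt)
    (hsoptatt : ∃ t : V → D, Function.Surjective t ∧ φ t = sopt)
    (r ε : ℚ) (hε : 0 < ε) (hεr : ε ≤ r) (hr : r ≤ 1)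
    (s : V → D) (hs : r * (opt : ℚ) ≤ (φ s : ℚ))
    (hbig : r * (Fintype.card D : ℚ) * (amax : ℚ) / ε ≤ (Fintype.card V : ℚ))
    (U : Finset V) (hUcard : U.card = Fintype.card D)
    (hUmin : ∀ x ∈ U, ∀ y : V, y ∉ U →
      (∑ i ∈ Finset.univ.filter fun i => x ∈ Sc i, w i * c i s) ≤
        (∑ i ∈ Finset.univ.filter fun i => y ∈ Sc i, w i * c i s))
    (s' : V → D) (hs'out : ∀ x : V, x ∉ U → s' x = s x)
    (hs'bij : Set.BijOn s' (↑U) Set.univ) :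
    Function.Surjective s' ∧ (r - ε) * (sopt : ℚ) ≤ (φ s' : ℚ) := by
  classical
  have hsurj : Function.Surjective s' := by
    intro b
    obtain ⟨x, _, hx⟩ := hs'bij.surjOn (Set.mem_univ b)
    exact ⟨x, hx⟩
  refine ⟨hsurj, ?_⟩
  set contrib : V → NNRat :=
    fun x => ∑ i ∈ Finset.univ.filter fun i => x ∈ Sc i, w i * c i s with hcontrib
  set A : NNRat := ∑ x ∈ U, contrib x with hAdef
  -- swap lemma
  have hswap : ∀ X : Finset V,
      ∑ x ∈ X, contrib x = ∑ i, ((Sc i ∩ X).card : NNRat) * (w i * c i s) := by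
    intro X
    simp only [hcontrib, Finset.sum_filter]
    rw [Finset.sum_comm]
    refine Finset.sum_congr rfl fun i _ => ?_
    rw [← Finset.sum_filter, Finset.sum_const, Finset.filter_mem_eq_inter,
      Finset.inter_comm, nsmul_eq_mul]
  -- φ s ≤ φ s' + A
  have hFs' : φ s ≤ φ s' + A := by
    have hsplit := Finset.sum_filter_add_sum_filter_not Finset.univ
      (fun i => (Sc i ∩ U).Nonempty) (fun i => w i * c i s)
    have h1 : ∑ i ∈ Finset.univ.filter (fun i => (Sc i ∩ U).Nonempty), w i * c i s ≤ A := by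
      calc ∑ i ∈ Finset.univ.filter (fun i => (Sc i ∩ U).Nonempty), w i * c i s
          ≤ ∑ i ∈ Finset.univ.filter (fun i => (Sc i ∩ U).Nonempty),
              ((Sc i ∩ U).card : NNRat) * (w i * c i s) := by
            refine Finset.sum_le_sum fun i hi => ?_
            rw [Finset.mem_filter] at hi
            have : (1 : NNRat) ≤ ((Sc i ∩ U).card : NNRat) := by
              exact_mod_cast Finset.card_pos.mpr hi.2
            exact le_mul_of_one_le_left zero_le this
        _ ≤ ∑ i, ((Sc i ∩ U).card : NNRat) * (w i * c i s) :=
            Finset.sum_le_sum_of_subset (Finset.filter_subset _ _)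
        _ = A := (hswap U).symm
    have h2 : ∑ i ∈ Finset.univ.filter (fun i => ¬ (Sc i ∩ U).Nonempty), w i * c i s
        ≤ φ s' := by
      rw [hφ]
      calc ∑ i ∈ Finset.univ.filter (fun i => ¬ (Sc i ∩ U).Nonempty), w i * c i s
          = ∑ i ∈ Finset.univ.filter (fun i => ¬ (Sc i ∩ U).Nonempty), w i * c i s' := by
            refine Finset.sum_congr rfl fun i hi => ?_
            rw [Finset.mem_filter, Finset.not_nonempty_iff_eq_empty] at hi
            have : c i s = c i s' := by
              refine hdep i s s' fun x hx => ?_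
              have hxU : x ∉ U := fun hxU =>
                (Finset.notMem_empty x) (hi.2 ▸ Finset.mem_inter.mpr ⟨hx, hxU⟩)
              exact (hs'out x hxU).symm
            rw [this]
        _ ≤ ∑ i, w i * c i s' := Finset.sum_le_sum_of_subset (Finset.filter_subset _ _)
    calc φ s = _ + _ := by rw [hφ, ← hsplit]
      _ ≤ A + φ s' := add_le_add h1 h2
      _ = φ s' + A := add_comm _ _
  -- key : n * A ≤ d * (amax * φ s)
  have hdD : (U.card : NNRat) = (Fintype.card D : NNRat) := by exact_mod_cast hUcard
  have hAy : ∀ y ∉ U, A ≤ (U.card : NNRat) * contrib y := by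
    intro y hy
    calc A ≤ ∑ _x ∈ U, contrib y := Finset.sum_le_sum fun x hx => hUmin x hx y hy
      _ = (U.card : NNRat) * contrib y := by rw [Finset.sum_const, nsmul_eq_mul]
  have hcompl : (Uᶜ.card : NNRat) * A ≤ (U.card : NNRat) * ∑ y ∈ Uᶜ, contrib y := by
    calc (Uᶜ.card : NNRat) * A = ∑ _y ∈ Uᶜ, A := by rw [Finset.sum_const, nsmul_eq_mul]
      _ ≤ ∑ y ∈ Uᶜ, (U.card : NNRat) * contrib y :=
          Finset.sum_le_sum fun y hy => hAy y (Finset.mem_compl.mp hy)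
      _ = (U.card : NNRat) * ∑ y ∈ Uᶜ, contrib y := by rw [Finset.mul_sum]
  have htot : A + ∑ y ∈ Uᶜ, contrib y = ∑ y, contrib y := Finset.sum_add_sum_compl U contrib
  have hT : ∑ y, contrib y ≤ (amax : NNRat) * φ s := by
    rw [hswap Finset.univ, hφ, Finset.mul_sum]
    refine Finset.sum_le_sum fun i _ => ?_
    have : ((Sc i ∩ Finset.univ).card : NNRat) ≤ (amax : NNRat) := by
      exact_mod_cast le_trans (Finset.card_le_card Finset.inter_subset_left) (har i)
    exact mul_le_mul_of_nonneg_right this zero_le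
  have key : (Fintype.card V : NNRat) * A
      ≤ (Fintype.card D : NNRat) * ((amax : NNRat) * φ s) := by
    have hn : (Fintype.card V : NNRat) = (U.card : NNRat) + (Uᶜ.card : NNRat) := by
      exact_mod_cast (Finset.card_add_card_compl U).symm
    calc (Fintype.card V : NNRat) * A = (U.card : NNRat) * A + (Uᶜ.card : NNRat) * A := by
          rw [hn, add_mul]
      _ ≤ (U.card : NNRat) * A + (U.card : NNRat) * ∑ y ∈ Uᶜ, contrib y :=
          add_le_add (le_refl _) hcompl
      _ = (U.card : NNRat) * (∑ y, contrib y) := by rw [← mul_add, htot]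
      _ ≤ (Fintype.card D : NNRat) * ((amax : NNRat) * φ s) := by
          rw [hdD]
          exact mul_le_mul_of_nonneg_left hT zero_le
  -- pass to ℚ
  have keyQ : (Fintype.card V : ℚ) * (A : ℚ)
      ≤ (Fintype.card D : ℚ) * ((amax : ℚ) * (φ s : ℚ)) := by
    have := (NNRat.cast_le (K := ℚ)).mpr key
    push_cast at this
    convert this using 2 <;> push_cast <;> ring
  have hFs'Q : (φ s : ℚ) ≤ (φ s' : ℚ) + (A : ℚ) := by
    have := (NNRat.cast_le (K := ℚ)).mpr hFs'
    push_cast at this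
    exact this
  have hsoptle : (sopt : ℚ) ≤ (opt : ℚ) := by
    obtain ⟨t, ht, hts⟩ := hsoptatt
    exact_mod_cast hts ▸ hoptub t
  have hbig' : r * (Fintype.card D : ℚ) * (amax : ℚ) ≤ ε * (Fintype.card V : ℚ) := by
    rw [div_le_iff₀ hε] at hbig
    linarith
  have hrpos : (0:ℚ) < r := lt_of_lt_of_le hε hεr
  have hFO : (φ s : ℚ) ≤ (opt : ℚ) := by exact_mod_cast hoptub s
  have hA0 : (0:ℚ) ≤ (A : ℚ) := by positivity
  have hF'0 : (0:ℚ) ≤ (φ s' : ℚ) := by positivity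
  have hS0 : (0:ℚ) ≤ (sopt : ℚ) := by positivity
  rcases Nat.eq_zero_or_pos (Fintype.card V) with hV | hV
  · -- V is empty: U = ∅, A = 0
    have hU0 : U = ∅ := Finset.card_eq_zero.mp
      (Nat.le_zero.mp (hV ▸ Finset.card_le_univ U))
    have hA0' : A = 0 := by rw [hAdef, hU0, Finset.sum_empty]
    have hA0Q : (A:ℚ) = 0 := by rw [hA0']; norm_num
    nlinarith [hsoptle, hs, hFs'Q]
  · have hnpos : (0:ℚ) < (Fintype.card V : ℚ) := by exact_mod_cast hV
    -- r * A ≤ ε * φ s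
    have h1 : r * (A:ℚ) ≤ ε * (φ s : ℚ) := by
      have ha := mul_le_mul_of_nonneg_left keyQ hrpos.le
      have hb := mul_le_mul_of_nonneg_right hbig' (NNRat.cast_nonneg (φ s))
      have hc : (Fintype.card V : ℚ) * (r * (A:ℚ)) ≤ (Fintype.card V : ℚ) * (ε * (φ s : ℚ)) := by
        nlinarith [ha, hb]
      exact le_of_mul_le_mul_left hc hnpos
    have h3 : (r - ε) * (opt:ℚ) ≤ (φ s : ℚ) - (A:ℚ) := by
      have hrd : r * ((r - ε) * (opt:ℚ)) ≤ r * ((φ s : ℚ) - (A:ℚ)) := by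
        nlinarith [h1, hs, hεr, hFO, hA0]
      exact le_of_mul_le_mul_left hrd hrpos
    nlinarith [hsoptle, h3, hFs'Q, hεr, hS0]
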